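/- Let φ : G → ℂ be a continuous bi-K-invariant spherical function, and define χ_φ(f) = ∫_G f(s) φ(s⁻¹) dμ_G(s) for continuous compactly supported f. Then χ_φ is multiplicative on the bi-K-invariant functions: for all f, g ∈ C_c(K\G/K), χ_φ(f ⋆ g) = χ_φ(f) · χ_φ(g). -/

import Mathlib

open MeasureTheory

noncomputable section

/-- `χ_φ` is multiplicative on `C_c(K\G/K)`: for spherical `φ` and bi-`K`-invariant
`f, g ∈ C_c(K\G/K)` one has `χ_φ(f ⋆ g) = χ_φ(f)·χ_φ(g)`, where
`χ_φ(f) = ∫_G f(s) φ(s⁻¹) dμ_G(s)` and `(f ⋆ g)(s) = ∫_G f(t) g(t⁻¹ s) dμ_G(t)`. -/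
theorem statement8 {G : Type*} [Group G] [TopologicalSpace G] [IsTopologicalGroup G]
    [LocallyCompactSpace G] [T2Space G] [MeasurableSpace G] [BorelSpace G]
    (μG : Measure G) [μG.IsHaarMeasure] [μG.Regular]
    (K : Subgroup G) (hK : IsCompact (K : Set G))
    [MeasurableSpace K] [BorelSpace K]
    (μK : Measure K) [IsProbabilityMeasure μK]
    [μK.IsMulLeftInvariant] [μK.IsMulRightInvariant] [μK.IsInvInvariant]
    (φ : G → ℂ) (hφ : Continuous φ) (hφ0 : φ ≠ 0)
    (hφbi : ∀ s : G, ∀ k ∈ K, ∀ k' ∈ K, φ (k * s * k') = φ s)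
    (hsph : ∀ s t : G, φ s * φ t = ∫ k : K, φ (s * (k : G) * t) ∂μK)
    (f g : G → ℂ)
    (hf : Continuous f) (hfc : HasCompactSupport f)
    (hfbi : ∀ s : G, ∀ k ∈ K, ∀ k' ∈ K, f (k * s * k') = f s)
    (hg : Continuous g) (hgc : HasCompactSupport g)
    (hgbi : ∀ s : G, ∀ k ∈ K, ∀ k' ∈ K, g (k * s * k') = g s) :
    ∫ s, (∫ t, f t * g (t⁻¹ * s) ∂μG) * φ s⁻¹ ∂μG
      = (∫ s, f s * φ s⁻¹ ∂μG) * ∫ s, g s * φ s⁻¹ ∂μG := by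

  have hKcs : CompactSpace K := isCompact_iff_compactSpace.mp hK
  -- Key lemma: ∫ g(s) φ(s⁻¹t⁻¹) ds = (∫ g(s) φ(s⁻¹) ds) * φ(t⁻¹)
  have key : ∀ t : G, ∫ s, g s * φ (s⁻¹ * t⁻¹) ∂μG
      = (∫ s, g s * φ s⁻¹ ∂μG) * φ t⁻¹ := by
    intro t
    have h1 : ∀ k : K, ∫ s, g s * φ (s⁻¹ * (k : G) * t⁻¹) ∂μG
        = ∫ s, g s * φ (s⁻¹ * t⁻¹) ∂μG := by
      intro k
      calc ∫ s, g s * φ (s⁻¹ * (k : G) * t⁻¹) ∂μG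
          = ∫ s, g ((k : G) * s) * φ (((k : G) * s)⁻¹ * (k : G) * t⁻¹) ∂μG :=
            (integral_mul_left_eq_self (fun s => g s * φ (s⁻¹ * (k : G) * t⁻¹)) (k : G)).symm
        _ = ∫ s, g s * φ (s⁻¹ * t⁻¹) ∂μG := by
            congr 1; ext s
            have h2 : g ((k : G) * s) = g s := by
              simpa using hgbi s (k : G) k.2 1 (one_mem K)
            rw [h2]
            congr 2
            group
    symm
    calc (∫ s, g s * φ s⁻¹ ∂μG) * φ t⁻¹
        = ∫ s, g s * (φ s⁻¹ * φ t⁻¹) ∂μG := by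
          rw [← integral_mul_const]; congr 1; ext s; ring
      _ = ∫ s, g s * ∫ k : K, φ (s⁻¹ * (k : G) * t⁻¹) ∂μK ∂μG := by
          congr 1; ext s; rw [hsph]
      _ = ∫ s, ∫ k : K, g s * φ (s⁻¹ * (k : G) * t⁻¹) ∂μK ∂μG := by
          congr 1; ext s; rw [integral_const_mul]
      _ = ∫ k : K, ∫ s, g s * φ (s⁻¹ * (k : G) * t⁻¹) ∂μG ∂μK := by
          apply integral_integral_swap_of_hasCompactSupport
          · apply Continuous.mul
            · exact hg.comp continuous_fst
            · exact hφ.comp <| by fun_prop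
          · apply HasCompactSupport.intro (hgc.prod (isCompact_univ (X := K)))
            rintro ⟨s, k⟩ hsk
            have hs : s ∉ tsupport g := by
              simpa using fun h => hsk ⟨h, Set.mem_univ k⟩
            simp [Function.uncurry, image_eq_zero_of_notMem_tsupport hs]
      _ = ∫ _ : K, ∫ s, g s * φ (s⁻¹ * t⁻¹) ∂μG ∂μK := by
          congr 1; ext k; exact h1 k
      _ = ∫ s, g s * φ (s⁻¹ * t⁻¹) ∂μG := by
          simp
  calc ∫ s, (∫ t, f t * g (t⁻¹ * s) ∂μG) * φ s⁻¹ ∂μG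
      = ∫ s, ∫ t, f t * g (t⁻¹ * s) * φ s⁻¹ ∂μG ∂μG := by
        congr 1; ext s; rw [← integral_mul_const]
    _ = ∫ t, ∫ s, f t * g (t⁻¹ * s) * φ s⁻¹ ∂μG ∂μG := by
        apply integral_integral_swap_of_hasCompactSupport
        · apply Continuous.mul
          · apply Continuous.mul
            · exact hf.comp continuous_snd
            · exact hg.comp <| by fun_prop
          · exact hφ.comp <| by fun_prop
        · apply HasCompactSupport.intro
            ((hfc.mul hgc).prod hfc)
          rintro ⟨s, t⟩ hst
          simp only [Set.mem_prod, not_and_or] at hst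
          rcases hst with hs | ht
          · by_cases ht' : t ∈ tsupport f
            · have hg0 : g (t⁻¹ * s) = 0 := by
                by_contra hne
                have hm := Set.mul_mem_mul ht' (subset_tsupport _ hne)
                rw [mul_inv_cancel_left] at hm
                exact hs hm
              simp [Function.uncurry, hg0]
            · simp [Function.uncurry, image_eq_zero_of_notMem_tsupport ht']
          · simp [Function.uncurry, image_eq_zero_of_notMem_tsupport ht]
    _ = ∫ t, ∫ s, f t * (g s * φ (s⁻¹ * t⁻¹)) ∂μG ∂μG := by
        congr 1; ext t
        calc ∫ s, f t * g (t⁻¹ * s) * φ s⁻¹ ∂μG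
            = ∫ s, f t * g (t⁻¹ * (t * s)) * φ (t * s)⁻¹ ∂μG :=
              (integral_mul_left_eq_self (fun s => f t * g (t⁻¹ * s) * φ s⁻¹) t).symm
          _ = ∫ s, f t * (g s * φ (s⁻¹ * t⁻¹)) ∂μG := by
              congr 1; ext s
              rw [show t⁻¹ * (t * s) = s by group, show (t * s)⁻¹ = s⁻¹ * t⁻¹ by group]
              ring
    _ = ∫ t, f t * ((∫ s, g s * φ s⁻¹ ∂μG) * φ t⁻¹) ∂μG := by
        congr 1; ext t; rw [integral_const_mul, key t]
    _ = (∫ s, f s * φ s⁻¹ ∂μG) * ∫ s, g s * φ s⁻¹ ∂μG := by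
        simp only [show ∀ t : G, f t * ((∫ s, g s * φ s⁻¹ ∂μG) * φ t⁻¹)
          = (∫ s, g s * φ s⁻¹ ∂μG) * (f t * φ t⁻¹) from fun t => by ring]
        rw [integral_const_mul, mul_comm]

end
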